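/- arXiv:2605.12600 — 2 statements merged into one kernel-verified Lean document; each statement's English description precedes it below -/
import Mathlib

section
/- Let L ≥ 1, let 𝒞 = (C₁,…,C_K) be an interval partition of {0,…,L−1} with blocks C_j = {a_j,…,a_j+w_j−1}, and let u ≤ v be rows in {0,…,L−1}. Consider the subgrid S = {u,…,v} × C_j. Then the boustrophedon ordering m_𝒞 restricts to a Hamiltonian path through S: (i) the image m_𝒞(S) is the set of consecutive integers {L·a_j + w_j·u, …, L·a_j + w_j·(v+1) − 1}; and (ii) whenever p, q ∈ S satisfy m_𝒞(q) = m_𝒞(p) + 1, the points p and q are nearest neighbors in the grid, i.e. |p₁−q₁| + |p₂−q₂| = 1. -/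
/-- `ρ^{(w)}_r(c) = c` for even `r` and `w−1−c` for odd `r`. -/
def rhoW (w r c : ℕ) : ℕ := if r % 2 = 0 then c else w - 1 - c

lemma rhoW_lt (w r c : ℕ) (hw : 0 < w) (h : c < w) : rhoW w r c < w := by
  unfold rhoW; split <;> omega

lemma rhoW_invol (w r c : ℕ) (h : c < w) : rhoW w r (rhoW w r c) = c := by
  unfold rhoW; split <;> omega

lemma abs_helper (x y : ℤ) (h : (x = 0 ∧ (y = 1 ∨ y = -1)) ∨ (y = 0 ∧ (x = 1 ∨ x = -1))) :
    |x| + |y| = 1 := by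
  rcases h with ⟨rfl, rfl | rfl⟩ | ⟨rfl, rfl | rfl⟩ <;> norm_num

lemma key_step (W r r' d d' : ℕ) (hW : 0 < W) (hd : d < W) (hd' : d' < W)
    (heq : W * r' + rhoW W r' d' = W * r + rhoW W r d + 1) :
    (r' = r ∧ (d' = d + 1 ∨ d = d' + 1)) ∨ (r' = r + 1 ∧ d' = d) := by
  have hρ : rhoW W r d < W := rhoW_lt W r d hW hd
  have hρ' : rhoW W r' d' < W := rhoW_lt W r' d' hW hd'
  have h1 : r ≤ r' := by
    have hlt : W * r < W * (r' + 1) := by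
      have h : W * (r' + 1) = W * r' + W := by ring
      rw [h]; linarith
    have := Nat.lt_of_mul_lt_mul_left hlt
    omega
  have h2 : r' ≤ r + 1 := by
    have hle : W * r' ≤ W * (r + 1) := by
      have h : W * (r + 1) = W * r + W := by ring
      rw [h]; linarith
    exact Nat.le_of_mul_le_mul_left hle hW
  have hcase : r' = r ∨ r' = r + 1 := by omega
  rcases hcase with h | h
  · left
    rw [h] at heq ⊢
    refine ⟨rfl, ?_⟩
    have h3 : rhoW W r d' = rhoW W r d + 1 := by
      apply Nat.add_left_cancel (n := W * r)
      linarith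
    by_cases hpar : r % 2 = 0 <;>
      unfold rhoW at h3 <;>
      [rw [if_pos hpar, if_pos hpar] at h3; rw [if_neg hpar, if_neg hpar] at h3] <;>
      omega
  · right
    rw [h] at heq ⊢
    refine ⟨rfl, ?_⟩
    rw [show W * (r + 1) = W * r + W from by ring] at heq
    have h3 : W + rhoW W (r + 1) d' = rhoW W r d + 1 := by
      apply Nat.add_left_cancel (n := W * r)
      linarith
    have hρ'r : rhoW W (r + 1) d' < W := rhoW_lt W (r + 1) d' hW hd'
    have hρ'0 : rhoW W (r + 1) d' = 0 := by omega
    have hρ1 : rhoW W r d = W - 1 := by omega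
    by_cases hpar : r % 2 = 0
    · have hpar1 : ¬ ((r + 1) % 2 = 0) := by omega
      rw [rhoW, if_pos hpar] at hρ1
      rw [rhoW, if_neg hpar1] at hρ'0
      omega
    · have hpar1 : (r + 1) % 2 = 0 := by omega
      rw [rhoW, if_neg hpar] at hρ1
      rw [rhoW, if_pos hpar1] at hρ'0
      omega

/-- The boustrophedon ordering `m_𝒞` restricts to a Hamiltonian path through every
subgrid `S = {u,…,v} × C_j`: (i) the image `m_𝒞(S)` is the set of consecutive
integers `{L·a_j + w_j·u, …, L·a_j + w_j·(v+1) − 1}`, and (ii) points of `S` with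
consecutive ranks are nearest neighbors in the grid. -/
theorem stmt9 (L K : ℕ) (hL : 1 ≤ L) (hK : 1 ≤ K)
    (a w : ℕ → ℕ) (ha0 : a 0 = 0) (haK : a K = L)
    (hw : ∀ j < K, 1 ≤ w j) (hstep : ∀ j < K, a (j + 1) = a j + w j)
    (mC : ℕ × ℕ → ℕ)
    (hmC : ∀ j < K, ∀ r c : ℕ, a j ≤ c → c < a (j + 1) →
      mC (r, c) = L * a j + w j * r + rhoW (w j) r (c - a j))
    (j : ℕ) (hj : j < K) (u v : ℕ) (huv : u ≤ v) (hv : v ≤ L - 1) :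
    (mC '' {p : ℕ × ℕ | u ≤ p.1 ∧ p.1 ≤ v ∧ a j ≤ p.2 ∧ p.2 < a (j + 1)} =
      Set.Icc (L * a j + w j * u) (L * a j + w j * (v + 1) - 1)) ∧
    (∀ p q : ℕ × ℕ,
      (u ≤ p.1 ∧ p.1 ≤ v ∧ a j ≤ p.2 ∧ p.2 < a (j + 1)) →
      (u ≤ q.1 ∧ q.1 ≤ v ∧ a j ≤ q.2 ∧ q.2 < a (j + 1)) →
      mC q = mC p + 1 →
      |(p.1 : ℤ) - (q.1 : ℤ)| + |(p.2 : ℤ) - (q.2 : ℤ)| = 1) := by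
  have hW : 0 < w j := hw j hj
  have hA1 : a (j + 1) = a j + w j := hstep j hj
  have hWv1 : 1 ≤ w j * (v + 1) := Nat.mul_pos hW (Nat.succ_pos v)
  constructor
  · ext n
    constructor
    · rintro ⟨⟨r, c⟩, ⟨hru, hrv, hca, hcb⟩, rfl⟩
      rw [hmC j hj r c hca hcb]
      have hd : c - a j < w j := by omega
      have hρ : rhoW (w j) r (c - a j) < w j := rhoW_lt (w j) r _ hW hd
      have hlo : w j * u ≤ w j * r := Nat.mul_le_mul_left (w j) hru
      have hhi : w j * r ≤ w j * v := Nat.mul_le_mul_left (w j) hrv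
      have hvv : w j * (v + 1) = w j * v + w j := by ring
      constructor
      · linarith
      · apply Nat.le_sub_of_add_le
        linarith
    · rintro ⟨h1, h2⟩
      have hLA : L * a j ≤ n := le_trans (Nat.le_add_right _ _) h1
      obtain ⟨t, rfl⟩ : ∃ t, n = L * a j + t :=
        ⟨n - L * a j, (Nat.add_sub_cancel' hLA).symm⟩
      have ht1 : w j * u ≤ t := Nat.le_of_add_le_add_left h1
      have ht2 : t ≤ w j * (v + 1) - 1 :=
        Nat.le_of_add_le_add_left (by rwa [Nat.add_sub_assoc hWv1] at h2)
      set r := t / w j with hrdef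
      set s := t % w j with hsdef
      have hdm : w j * r + s = t := Nat.div_add_mod t (w j)
      have hs : s < w j := Nat.mod_lt _ hW
      have hur : u ≤ r := by
        rw [hrdef, Nat.le_div_iff_mul_le hW, mul_comm]
        exact ht1
      have hrv : r ≤ v := by
        have hlt : t < w j * (v + 1) := lt_of_le_of_lt ht2 (Nat.sub_lt hWv1 one_pos)
        have : r < v + 1 := by
          rw [hrdef, Nat.div_lt_iff_lt_mul hW, mul_comm]
          exact hlt
        omega
      have hρs : rhoW (w j) r s < w j := rhoW_lt (w j) r s hW hs
      refine ⟨(r, a j + rhoW (w j) r s), ⟨hur, hrv, Nat.le_add_right _ _, by omega⟩, ?_⟩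
      rw [hmC j hj r (a j + rhoW (w j) r s) (Nat.le_add_right _ _) (by omega)]
      rw [Nat.add_sub_cancel_left, rhoW_invol (w j) r s hs]
      linarith
  · rintro ⟨pr, pc⟩ ⟨qr, qc⟩ ⟨hpu, hpv, hpa, hpb⟩ ⟨hqu, hqv, hqa, hqb⟩ hcons
    rw [hmC j hj pr pc hpa hpb, hmC j hj qr qc hqa hqb] at hcons
    have heq : w j * qr + rhoW (w j) qr (qc - a j)
        = w j * pr + rhoW (w j) pr (pc - a j) + 1 := by linarith
    have hdp : pc - a j < w j := by omega
    have hdq : qc - a j < w j := by omega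
    have hk := key_step (w j) pr qr (pc - a j) (qc - a j) hW hdp hdq heq
    apply abs_helper
    simp only []
    omega
end

section
/- Let L ≥ 1, d ≥ 1 and let σ be a permutation of {1,…,d}. The d-dimensional S-pattern ordering m_S^σ is a Hamiltonian path in the d-dimensional grid graph: for every k with 0 ≤ k < L^d − 1, the two points v, w ∈ {0,…,L−1}^d with m_S^σ(v) = k and m_S^σ(w) = k+1 satisfy ∑_{i=1}^d |v_i − w_i| = 1, i.e. they differ in exactly one coordinate, by exactly 1. -/
/-- `ρ_r(c) = c` for even `r` and `L−1−c` for odd `r`. -/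
def rho (L r c : ℕ) : ℕ := if r % 2 = 0 then c else L - 1 - c

/-- `s_i(v) = ∑_{k > i} v_{σ(k)}` : the sum of the coordinates higher than `i` in
the dimensional hierarchy `σ`. -/
def sSum (d : ℕ) (σ : Equiv.Perm (Fin d)) (v : Fin d → ℕ) (i : Fin d) : ℕ :=
  ∑ k ∈ Finset.univ.filter (fun k => i < k), v (σ k)

/-- The `d`-dimensional S-pattern ordering
`m_S^σ(v) = ∑_i L^{i} · ρ_{s_i(v)}(v_{σ(i)})` (0-based `i`). -/
def mSd (L d : ℕ) (σ : Equiv.Perm (Fin d)) (v : Fin d → ℕ) : ℕ :=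
  ∑ i : Fin d, L ^ (i : ℕ) * rho L (sSum d σ v i) (v (σ i))

/-- digit of the code -/
def dig (L d : ℕ) (σ : Equiv.Perm (Fin d)) (v : Fin d → ℕ) (i : Fin d) : ℕ :=
  rho L (sSum d σ v i) (v (σ i))

lemma mSd_eq_sum_dig (L d : ℕ) (σ : Equiv.Perm (Fin d)) (v : Fin d → ℕ) :
    mSd L d σ v = ∑ i : Fin d, L ^ (i : ℕ) * dig L d σ v i := rfl

lemma dig_lt (L d : ℕ) (hL : 1 ≤ L) (σ : Equiv.Perm (Fin d)) (v : Fin d → ℕ)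
    (hv : ∀ i, v i < L) (i : Fin d) : dig L d σ v i < L := by
  have := hv (σ i)
  unfold dig rho
  split <;> omega

lemma geom_nat (L n : ℕ) (hL : 1 ≤ L) :
    ∑ i ∈ Finset.range n, L ^ i * (L - 1) = L ^ n - 1 := by
  induction n with
  | zero => simp
  | succ n ih =>
    rw [Finset.sum_range_succ, ih]
    have h1 : 1 ≤ L ^ n := Nat.one_le_pow _ _ hL
    have h3 : L ^ n * (L - 1) = L ^ n * L - L ^ n := by
      rw [Nat.mul_sub, mul_one]
    have h4 : L ^ (n + 1) = L ^ n * L := pow_succ L n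
    have h5 : L ^ n ≤ L ^ n * L := Nat.le_mul_of_pos_right _ (by omega)
    omega

/-- base-L digits are unique -/
lemma digits_unique (L : ℕ) (hL : 1 ≤ L) :
    ∀ d (D E : ℕ → ℕ), (∀ i, i < d → D i < L) → (∀ i, i < d → E i < L) →
    (∑ i ∈ Finset.range d, L ^ i * D i) = (∑ i ∈ Finset.range d, L ^ i * E i) →
    ∀ i, i < d → D i = E i := by
  intro d
  induction d with
  | zero => intro D E _ _ _ i hi; omega
  | succ n ih =>
    intro D E hD hE hsum i hi
    have hrw : ∀ F : ℕ → ℕ, (∑ i ∈ Finset.range (n+1), L ^ i * F i)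
        = L * (∑ i ∈ Finset.range n, L ^ i * F (i+1)) + F 0 := by
      intro F
      rw [Finset.sum_range_succ']
      simp only [pow_succ, pow_zero, one_mul, Finset.mul_sum]
      congr 1
      exact Finset.sum_congr rfl fun x _ => by ring
    rw [hrw D, hrw E] at hsum
    have hD0 : D 0 < L := hD 0 (by omega)
    have hE0 : E 0 < L := hE 0 (by omega)
    have hmod : D 0 = E 0 := by
      have h1 := congrArg (· % L) hsum
      simpa [Nat.mul_add_mod, Nat.mod_eq_of_lt hD0, Nat.mod_eq_of_lt hE0] using h1
    have hS : (∑ i ∈ Finset.range n, L ^ i * D (i+1))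
        = ∑ i ∈ Finset.range n, L ^ i * E (i+1) := by
      have : L * (∑ i ∈ Finset.range n, L ^ i * D (i+1))
          = L * (∑ i ∈ Finset.range n, L ^ i * E (i+1)) := by omega
      exact Nat.eq_of_mul_eq_mul_left (by omega) this
    rcases Nat.eq_zero_or_pos i with h0 | hpos
    · subst h0; exact hmod
    · have := ih (fun j => D (j+1)) (fun j => E (j+1))
        (fun j hj => hD (j+1) (by omega)) (fun j hj => hE (j+1) (by omega)) hS
        (i - 1) (by omega)
      simpa [Nat.sub_add_cancel hpos] using this

lemma sSum_congr (d : ℕ) (σ : Equiv.Perm (Fin d)) (v w : Fin d → ℕ) (i : Fin d)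
    (h : ∀ j : Fin d, i < j → v (σ j) = w (σ j)) : sSum d σ v i = sSum d σ w i := by
  unfold sSum
  apply Finset.sum_congr rfl
  intro k hk
  exact h k (by simpa using hk)

/-- injectivity of `mSd` on the grid -/
lemma mSd_inj (L d : ℕ) (hL : 1 ≤ L) (σ : Equiv.Perm (Fin d)) (v w : Fin d → ℕ)
    (hv : ∀ i, v i < L) (hw : ∀ i, w i < L) (h : mSd L d σ v = mSd L d σ w) :
    v = w := by
  have hdig : ∀ i : Fin d, dig L d σ v i = dig L d σ w i := by
    have hDv : ∀ n, n < d → (fun n => if h : n < d then dig L d σ v ⟨n, h⟩ else 0) n < L := by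
      intro n hn; simp only [dif_pos hn]; exact dig_lt L d hL σ v hv _
    have hDw : ∀ n, n < d → (fun n => if h : n < d then dig L d σ w ⟨n, h⟩ else 0) n < L := by
      intro n hn; simp only [dif_pos hn]; exact dig_lt L d hL σ w hw _
    have hsum : (∑ n ∈ Finset.range d, L ^ n * (if h : n < d then dig L d σ v ⟨n, h⟩ else 0))
        = ∑ n ∈ Finset.range d, L ^ n * (if h : n < d then dig L d σ w ⟨n, h⟩ else 0) := by
      rw [← Fin.sum_univ_eq_sum_range (fun n => L ^ n * (if h : n < d then dig L d σ v ⟨n, h⟩ else 0)) d,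
          ← Fin.sum_univ_eq_sum_range (fun n => L ^ n * (if h : n < d then dig L d σ w ⟨n, h⟩ else 0)) d]
      simp only [Fin.is_lt, dif_pos, Fin.eta]
      exact h
    intro i
    have := digits_unique L hL d _ _ hDv hDw hsum i i.isLt
    simpa [i.isLt] using this
  have key : ∀ n : ℕ, ∀ i : Fin d, (d - 1 - (i : ℕ)) = n → v (σ i) = w (σ i) := by
    intro n
    induction n using Nat.strong_induction_on with
    | _ n ih =>
      intro i hi
      have habove : ∀ j : Fin d, i < j → v (σ j) = w (σ j) := by
        intro j hij
        exact ih (d - 1 - (j : ℕ)) (by have := j.isLt; have : (j:ℕ) < d := j.isLt; omega) j rfl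
      have hs := sSum_congr d σ v w i habove
      have hd := hdig i
      unfold dig rho at hd
      rw [hs] at hd
      have h1 := hv (σ i); have h2 := hw (σ i)
      split at hd <;> omega
  funext j
  have := key (d - 1 - ((σ.symm j : Fin d) : ℕ)) (σ.symm j) rfl
  simpa using this

/-- if the code is below `L^d - 1` then some digit is below `L - 1` -/
lemma exists_small_dig (L d : ℕ) (hL : 1 ≤ L) (σ : Equiv.Perm (Fin d)) (v : Fin d → ℕ)
    (hv : ∀ i, v i < L) (h : mSd L d σ v < L ^ d - 1) :
    ∃ i : Fin d, dig L d σ v i < L - 1 := by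
  by_contra hc
  push_neg at hc
  have hall : ∀ i : Fin d, dig L d σ v i = L - 1 := by
    intro i
    have := dig_lt L d hL σ v hv i
    have := hc i
    omega
  have : mSd L d σ v = L ^ d - 1 := by
    rw [mSd_eq_sum_dig]
    rw [← geom_nat L d hL, ← Fin.sum_univ_eq_sum_range (fun n => L ^ n * (L - 1)) d]
    exact Finset.sum_congr rfl fun i _ => by rw [hall i]
  omega

/-- The `d`-dimensional S-pattern ordering is a Hamiltonian path in the
`d`-dimensional grid graph: grid points with consecutive ranks `k` and `k+1`
(for `0 ≤ k < L^d − 1`) differ in exactly one coordinate, by exactly `1`. -/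
theorem stmt13 (L d : ℕ) (hL : 1 ≤ L) (hd : 1 ≤ d) (σ : Equiv.Perm (Fin d))
    (k : ℕ) (hk : k < L ^ d - 1) (v w : Fin d → ℕ)
    (hv : ∀ i, v i < L) (hw : ∀ i, w i < L)
    (hvk : mSd L d σ v = k) (hwk : mSd L d σ w = k + 1) :
    (∑ i : Fin d, |(v i : ℤ) - (w i : ℤ)|) = 1 := by
  classical
  -- find the minimal index with digit < L - 1
  have hex : ∃ n : ℕ, ∃ h : n < d, dig L d σ v ⟨n, h⟩ < L - 1 := by
    obtain ⟨i, hi⟩ := exists_small_dig L d hL σ v hv (by omega)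
    exact ⟨i, i.isLt, by simpa using hi⟩
  let P : ℕ → Prop := fun n => ∃ h : n < d, dig L d σ v ⟨n, h⟩ < L - 1
  have hPex : ∃ n, P n := hex
  let n0 : ℕ := Nat.find hPex
  have hn0 : P n0 := Nat.find_spec hPex
  obtain ⟨hn0d, hdig0⟩ := hn0
  set i0 : Fin d := ⟨n0, hn0d⟩ with hi0def
  have hmin : ∀ j : Fin d, j < i0 → dig L d σ v j = L - 1 := by
    intro j hj
    have : ¬ P (j : ℕ) := Nat.find_min hPex hj
    have h2 := dig_lt L d hL σ v hv j
    simp only [P, not_exists, not_lt] at this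
    have := this j.isLt
    simp only [Fin.eta] at this
    omega
  -- the candidate successor
  set s0 : ℕ := sSum d σ v i0 with hs0def
  set t : ℕ := if s0 % 2 = 0 then v (σ i0) + 1 else v (σ i0) - 1 with htdef
  set w' : Fin d → ℕ := Function.update v (σ i0) t with hw'def
  have hvσ : v (σ i0) < L := hv (σ i0)
  -- digit at i0 in terms of v(σ i0)
  have hdig0' : dig L d σ v i0 = rho L s0 (v (σ i0)) := rfl
  have hvpos : s0 % 2 ≠ 0 → 1 ≤ v (σ i0) := by
    intro hodd
    rw [hdig0'] at hdig0
    unfold rho at hdig0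
    rw [if_neg hodd] at hdig0
    omega
  have hvtop : s0 % 2 = 0 → v (σ i0) + 1 < L := by
    intro heven
    rw [hdig0'] at hdig0
    unfold rho at hdig0
    rw [if_pos heven] at hdig0
    omega
  have hw'at : w' (σ i0) = t := Function.update_self _ _ _
  have hw'ne : ∀ j : Fin d, j ≠ i0 → w' (σ j) = v (σ j) := by
    intro j hj
    exact Function.update_of_ne (fun hc => hj (σ.injective hc)) _ _
  have hw'lt : ∀ i, w' i < L := by
    intro i
    rcases eq_or_ne i (σ i0) with rfl | hne
    · rw [hw'at, htdef]
      split
      · exact hvtop ‹_›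
      · omega
    · rw [hw'def, Function.update_of_ne hne]; exact hv i
  -- sSum identities
  have hsge : ∀ j : Fin d, i0 ≤ j → sSum d σ w' j = sSum d σ v j := by
    intro j hj
    apply sSum_congr
    intro l hl
    exact hw'ne l (by
      intro hc
      subst hc
      exact absurd (lt_of_le_of_lt hj hl) (lt_irrefl _))
  have hslt : ∀ j : Fin d, j < i0 →
      sSum d σ w' j = (sSum d σ v j - v (σ i0)) + t ∧ v (σ i0) ≤ sSum d σ v j := by
    intro j hj
    have hmem : i0 ∈ Finset.univ.filter (fun k => j < k) := by simp [hj]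
    have h1 : sSum d σ w' j = w' (σ i0) +
        ∑ l ∈ (Finset.univ.filter (fun k => j < k)).erase i0, w' (σ l) := by
      rw [sSum, ← Finset.add_sum_erase _ _ hmem]
    have h2 : sSum d σ v j = v (σ i0) +
        ∑ l ∈ (Finset.univ.filter (fun k => j < k)).erase i0, v (σ l) := by
      rw [sSum, ← Finset.add_sum_erase _ _ hmem]
    have h3 : ∑ l ∈ (Finset.univ.filter (fun k => j < k)).erase i0, w' (σ l)
        = ∑ l ∈ (Finset.univ.filter (fun k => j < k)).erase i0, v (σ l) := by
      apply Finset.sum_congr rfl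
      intro l hl
      exact hw'ne l (Finset.ne_of_mem_erase hl)
    rw [h1, h3, hw'at]
    omega
  -- digits of w'
  have hdigw'_lt : ∀ j : Fin d, j < i0 → dig L d σ w' j = 0 := by
    intro j hj
    obtain ⟨hs, hle⟩ := hslt j hj
    have hwj : w' (σ j) = v (σ j) := hw'ne j (ne_of_lt hj)
    have hold : dig L d σ v j = L - 1 := hmin j hj
    have hvj : v (σ j) < L := hv (σ j)
    unfold dig at hold ⊢
    rw [hwj, hs]
    unfold rho at hold ⊢
    have ht : t = v (σ i0) + 1 ∨ t + 1 = v (σ i0) := by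
      rw [htdef]; split
      · left; rfl
      · right; have := hvpos ‹_›; omega
    -- parity flips
    split at hold <;> split <;> omega
  have hdigw'_eq : dig L d σ w' i0 = dig L d σ v i0 + 1 := by
    have hs := hsge i0 (le_refl _)
    unfold dig
    rw [hs, hw'at, ← hs0def]
    unfold rho
    by_cases heven : s0 % 2 = 0
    · rw [if_pos heven, if_pos heven, htdef, if_pos heven]
    · have h1 := hvpos heven
      have h2 : rho L s0 (v (σ i0)) < L - 1 := hdig0
      unfold rho at h2
      rw [if_neg (by omega)] at h2
      rw [if_neg (by omega), if_neg (by omega), htdef, if_neg (by omega)]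
      omega
  have hdigw'_gt : ∀ j : Fin d, i0 < j → dig L d σ w' j = dig L d σ v j := by
    intro j hj
    unfold dig
    rw [hsge j (le_of_lt hj), hw'ne j (ne_of_gt hj)]
  -- now compute mSd w' = mSd v + 1, in ℤ
  have hmain : mSd L d σ w' = mSd L d σ v + 1 := by
    have hcast : ((mSd L d σ w' : ℤ) - mSd L d σ v) = 1 := by
      rw [mSd_eq_sum_dig, mSd_eq_sum_dig]
      push_cast
      rw [← Finset.sum_sub_distrib]
      have hterm : ∀ i : Fin d,
          ((L:ℤ) ^ (i:ℕ) * (dig L d σ w' i : ℤ) - (L:ℤ) ^ (i:ℕ) * (dig L d σ v i : ℤ))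
          = (fun n : ℕ => if n < n0 then -((L:ℤ) ^ n * ((L:ℤ) - 1))
              else if n = n0 then (L:ℤ) ^ n0 else 0) (i : ℕ) := by
        intro i
        rcases lt_trichotomy (i : Fin d) i0 with hlt | heq | hgt
        · have h1 := hdigw'_lt i hlt
          have h2 := hmin i hlt
          have hn : (i : ℕ) < n0 := hlt
          simp only [if_pos hn, h1, h2]
          have : ((L - 1 : ℕ) : ℤ) = (L : ℤ) - 1 := by
            have : 1 ≤ L := hL; push_cast [this]; ring
          push_cast [this]
          ring
        · have hn : ¬ ((i : ℕ) < n0) := by rw [heq]; simp [hi0def]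
          have hn2 : (i:ℕ) = n0 := by rw [heq]
          simp only [if_neg hn, if_pos hn2, heq, hdigw'_eq]
          rw [if_neg (lt_irrefl n0)]
          push_cast
          rw [if_pos (show (i0 : ℕ) = n0 from rfl)]
          ring
        · have hn : ¬ ((i : ℕ) < n0) := by
            have : (n0 : ℕ) < (i : ℕ) := hgt
            omega
          have hn2 : (i:ℕ) ≠ n0 := by
            have : (n0 : ℕ) < (i : ℕ) := hgt
            omega
          simp only [if_neg hn, if_neg hn2, hdigw'_gt i hgt]
          ring
      rw [Finset.sum_congr rfl (fun i _ => hterm i)]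
      rw [Fin.sum_univ_eq_sum_range (fun n : ℕ => if n < n0 then -((L:ℤ) ^ n * ((L:ℤ) - 1))
              else if n = n0 then (L:ℤ) ^ n0 else 0) d]
      have hsub : ∑ n ∈ Finset.range d, (if n < n0 then -((L:ℤ) ^ n * ((L:ℤ) - 1))
              else if n = n0 then (L:ℤ) ^ n0 else 0)
          = ∑ n ∈ Finset.range (n0 + 1), (if n < n0 then -((L:ℤ) ^ n * ((L:ℤ) - 1))
              else if n = n0 then (L:ℤ) ^ n0 else 0) := by
        symm
        apply Finset.sum_subset
        · intro x hx
          simp only [Finset.mem_range] at *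
          omega
        · intro x hx hnx
          simp only [Finset.mem_range] at hx hnx
          rw [if_neg (by omega), if_neg (by omega)]
      rw [hsub, Finset.sum_range_succ, if_neg (lt_irrefl _), if_pos rfl]
      have : ∑ n ∈ Finset.range n0, (if n < n0 then -((L:ℤ) ^ n * ((L:ℤ) - 1))
              else if n = n0 then (L:ℤ) ^ n0 else 0)
          = -(((L:ℤ) - 1) * ∑ n ∈ Finset.range n0, (L:ℤ) ^ n) := by
        rw [Finset.mul_sum, ← Finset.sum_neg_distrib]
        apply Finset.sum_congr rfl
        intro x hx
        simp only [Finset.mem_range] at hx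
        rw [if_pos hx]
        ring
      rw [this, mul_geom_sum]
      ring
    have h1 : (mSd L d σ w' : ℤ) = mSd L d σ v + 1 := by omega
    exact_mod_cast h1
  -- conclude w = w'
  have hww' : w = w' := by
    apply mSd_inj L d hL σ w w' hw hw'lt
    rw [hwk, hmain, hvk]
  -- final computation
  rw [hww']
  rw [Finset.sum_eq_single (σ i0)]
  · rw [hw'at, htdef]
    split
    · push_cast; ring_nf; simp [abs_of_nonpos]
    · have h1 := hvpos ‹_›
      have : ((v (σ i0) - 1 : ℕ) : ℤ) = (v (σ i0) : ℤ) - 1 := by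
        push_cast [h1]; ring
      rw [this]
      simp
  · intro b _ hb
    have hbv : w' b = v b := by rw [hw'def]; exact Function.update_of_ne hb _ _
    rw [hbv]
    simp
  · intro hmem
    exact absurd (Finset.mem_univ _) hmem
end
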